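/- Let R be a unital ring, e an idempotent with qxe = 0 for all x ∈ R, q = 1 - e, and φ₁ a multiplicative Lie derivation with eφ₁(q)q = 0. Then φ₁(e) ∈ Z(R) and φ₁(q) ∈ Z(R), and moreover φ₁(exq) = eφ₁(x)q for all x ∈ R. -/

import Mathlib

theorem image_of_idempotents_central (R : Type*) [Ring R] (e : R) (he : e * e = e)
    (htri : ∀ x : R, (1 - e) * x * e = 0) (φ₁ : R → R)
    (hφ : ∀ x y : R, φ₁ (x * y - y * x) = φ₁ x * y - y * φ₁ x + (x * φ₁ y - φ₁ y * x))
    (h0 : e * φ₁ (1 - e) * (1 - e) = 0) :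
    φ₁ e ∈ Set.center R ∧ φ₁ (1 - e) ∈ Set.center R ∧
    ∀ x : R, φ₁ (e * x * (1 - e)) = e * φ₁ x * (1 - e) := by
  have heq : e * (1 - e) = 0 := by rw [mul_sub, mul_one, he, sub_self]
  have hqe : (1 - e) * e = 0 := by rw [sub_mul, one_mul, he, sub_self]
  have hq2 : (1 - e) * (1 - e) = (1 - e) := by rw [mul_sub, mul_one, hqe, sub_zero]
  have hye : ∀ y : R, y * e = e * y * e := by
    intro y
    have h := htri y
    rw [sub_mul, one_mul, sub_mul, sub_eq_zero] at h
    exact h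
  have hk : ∀ y : R, e * y - y * e = e * y * (1 - e) := by
    intro y
    rw [mul_sub, mul_one, ← hye y]
  have hz : φ₁ 0 = 0 := by
    have h := hφ e e
    rw [sub_self] at h
    rw [h]; abel
  have hae : φ₁ e * e = e * φ₁ e := by
    have h := hφ e (1 - e)
    rw [heq, hqe, sub_self, hz, hk (φ₁ (1 - e)), h0, add_zero] at h
    have h2 : φ₁ e * (1 - e) - (1 - e) * φ₁ e = e * φ₁ e - φ₁ e * e := by noncomm_ring
    rw [h2] at h
    exact (sub_eq_zero.mp h.symm).symm
  have hqa : (1 - e) * φ₁ e = φ₁ e * (1 - e) := by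
    rw [sub_mul, one_mul, mul_sub, mul_one, hae]
  have hkk : ∀ y : R, e * (e * y * (1 - e)) * (1 - e) = e * y * (1 - e) := by
    intro y
    rw [← mul_assoc e (e * y) (1 - e), ← mul_assoc e e y, he,
      mul_assoc (e * y) (1 - e) (1 - e), hq2]
  have hax : ∀ x : R, φ₁ e * x = x * φ₁ e := by
    intro x
    have hA := hφ e x
    rw [hk x, hk (φ₁ x)] at hA
    have hB := hφ e (e * x * (1 - e))
    have h1 : e * (e * x * (1 - e)) = e * x * (1 - e) := by
      rw [← mul_assoc, ← mul_assoc, he]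
    have h2 : e * x * (1 - e) * e = 0 := by
      rw [mul_assoc, hqe, mul_zero]
    rw [h1, h2, sub_zero, hk (φ₁ (e * x * (1 - e)))] at hB
    rw [hA] at hB
    have g1 : φ₁ e * (e * x * (1 - e)) = e * (φ₁ e * x) * (1 - e) := by
      rw [← mul_assoc, ← mul_assoc, hae, mul_assoc e (φ₁ e) x]
    have g2 : e * x * (1 - e) * φ₁ e = e * (x * φ₁ e) * (1 - e) := by
      rw [mul_assoc (e * x), hqa, ← mul_assoc (e * x), mul_assoc e x (φ₁ e)]
    have hc1 : φ₁ e * (e * x * (1 - e)) - e * x * (1 - e) * φ₁ e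
        = e * (φ₁ e * x - x * φ₁ e) * (1 - e) := by
      rw [g1, g2, ← sub_mul, ← mul_sub]
    have hc2 : e * (φ₁ e * x - x * φ₁ e + e * φ₁ x * (1 - e)) * (1 - e)
        = e * (φ₁ e * x - x * φ₁ e) * (1 - e) + e * φ₁ x * (1 - e) := by
      rw [mul_add, add_mul, hkk]
    rw [hc1, hc2, ← add_assoc] at hB
    have hc3 := add_right_cancel hB
    have hc4 : e * (φ₁ e * x - x * φ₁ e) * (1 - e)
        = e * (e * (φ₁ e * x - x * φ₁ e) * (1 - e)
            + e * (φ₁ e * x - x * φ₁ e) * (1 - e)) * (1 - e) := by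
      conv_lhs => rw [hc3]
    rw [mul_add, add_mul, hkk] at hc4
    have hd0 : e * (φ₁ e * x - x * φ₁ e) * (1 - e) = 0 := right_eq_add.mp hc4
    rw [hd0, add_zero] at hc3
    exact sub_eq_zero.mp hc3
  refine ⟨Semigroup.mem_center_iff.mpr fun g => (hax g).symm, ?_, ?_⟩
  · have hbx : ∀ x : R, φ₁ (1 - e) * x = x * φ₁ (1 - e) := by
      intro x
      have hC := hφ (1 - e) x
      have hD := hφ x e
      have harg : ∀ y : R, (1 - e) * y - y * (1 - e) = y * e - e * y := fun y => by
        noncomm_ring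
      rw [harg x, harg (φ₁ x)] at hC
      rw [hD] at hC
      rw [hax x, sub_self, add_zero] at hC
      exact sub_eq_zero.mp (right_eq_add.mp hC)
    exact Semigroup.mem_center_iff.mpr fun g => (hbx g).symm
  · intro x
    have hA := hφ e x
    rw [hk x, hk (φ₁ x), hax x, sub_self, zero_add] at hA
    exact hA
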